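/- Assume t_s ≥ t_k. Define g(p) = t_k (∫_{π̲}^{p} x f(x) dx)/F(p) − π̄ t_k + (p F(p) − ∫_{π̲}^{p} x f(x) dx)·(t_s − t_k (1/F(p) − 1)). Then g is nondecreasing on the region {p ∈ [π̲, π̄] : F(p) ≥ 1/2}, and g(π̄) = (π̄ − ∫_{π̲}^{π̄} x f(x) dx)(t_s − t_k) ≥ 0. -/
import Mathlib

open MeasureTheory intervalIntegral Set

/-- With `t_s ≥ t_k`, the function
`g(p) = t_k (∫_{π̲}^{p} x f(x) dx)/F(p) − π̄ t_k
        + (p F(p) − ∫_{π̲}^{p} x f(x) dx)·(t_s − t_k (1/F(p) − 1))`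
is nondecreasing on `{p ∈ [π̲, π̄] : F(p) ≥ 1/2}`, and
`g(π̄) = (π̄ − ∫_{π̲}^{π̄} x f(x) dx)(t_s − t_k) ≥ 0`. -/
theorem stmt_7
    (πlo πhi : ℝ) (f F : ℝ → ℝ)
    (hπlo : 0 ≤ πlo) (hlt : πlo < πhi)
    (hcont : ContinuousOn f (Set.Icc πlo πhi))
    (hnn : ∀ x ∈ Set.Icc πlo πhi, 0 ≤ f x)
    (hanti : ∀ x ∈ Set.Icc πlo πhi, ∀ y ∈ Set.Icc πlo πhi, x ≤ y → f y ≤ f x)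
    (hone : (∫ x in πlo..πhi, f x) = 1)
    (hF : ∀ p, F p = ∫ x in πlo..p, f x)
    (tk ts : ℝ) (htk : 0 < tk) (hts : 0 < ts) (htsk : tk ≤ ts)
    (g : ℝ → ℝ)
    (hg : ∀ p, g p = tk * ((∫ x in πlo..p, x * f x) / F p) - πhi * tk +
      (p * F p - ∫ x in πlo..p, x * f x) * (ts - tk * (1 / F p - 1))) :
    (∀ p ∈ Set.Icc πlo πhi, ∀ p' ∈ Set.Icc πlo πhi,
      1 / 2 ≤ F p → 1 / 2 ≤ F p' → p ≤ p' → g p ≤ g p') ∧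
    g πhi = (πhi - ∫ x in πlo..πhi, x * f x) * (ts - tk) ∧
    0 ≤ g πhi := by
  have hle : πlo ≤ πhi := hlt.le
  have hloIcc : πlo ∈ Set.Icc πlo πhi := ⟨le_refl _, hle⟩
  have hhiIcc : πhi ∈ Set.Icc πlo πhi := ⟨hle, le_refl _⟩
  have hcontxf : ContinuousOn (fun x => x * f x) (Set.Icc πlo πhi) :=
    continuousOn_id.mul hcont
  -- integrability
  have hintf : ∀ a ∈ Set.Icc πlo πhi, ∀ b ∈ Set.Icc πlo πhi,
      IntervalIntegrable f volume a b := fun a ha b hb =>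
    (hcont.mono (Set.uIcc_subset_Icc ha hb)).intervalIntegrable
  have hintxf : ∀ a ∈ Set.Icc πlo πhi, ∀ b ∈ Set.Icc πlo πhi,
      IntervalIntegrable (fun x => x * f x) volume a b := fun a ha b hb =>
    (hcontxf.mono (Set.uIcc_subset_Icc ha hb)).intervalIntegrable
  -- F is nondecreasing on the interval
  have hFmono : ∀ a ∈ Set.Icc πlo πhi, ∀ b ∈ Set.Icc πlo πhi, a ≤ b → F a ≤ F b := by
    intro a ha b hb hab
    rw [hF, hF]
    have hsplit : (∫ x in πlo..a, f x) + (∫ x in a..b, f x) = ∫ x in πlo..b, f x :=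
      intervalIntegral.integral_add_adjacent_intervals (hintf πlo hloIcc a ha)
        (hintf a ha b hb)
    have hpos : 0 ≤ ∫ x in a..b, f x := by
      apply intervalIntegral.integral_nonneg hab
      intro u hu
      exact hnn u ⟨ha.1.trans hu.1, hu.2.trans hb.2⟩
    linarith
  -- ∫ t f ≤ x F x
  have hxFA : ∀ x ∈ Set.Icc πlo πhi, (∫ t in πlo..x, t * f t) ≤ x * F x := by
    intro x hx
    have : x * F x = ∫ t in πlo..x, x * f t := by
      rw [hF, intervalIntegral.integral_const_mul]
    rw [this]
    apply intervalIntegral.integral_mono_on hx.1 (hintxf πlo hloIcc x hx)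
      ((hintf πlo hloIcc x hx).const_mul x)
    intro u hu
    have hu' : u ∈ Set.Icc πlo πhi := ⟨hu.1, hu.2.trans hx.2⟩
    exact mul_le_mul_of_nonneg_right hu.2 (hnn u hu')
  have hFhi : F πhi = 1 := by rw [hF]; exact hone
  -- the value at πhi
  have hval : g πhi = (πhi - ∫ x in πlo..πhi, x * f x) * (ts - tk) := by
    rw [hg, hFhi]; ring
  have hA1 : (∫ x in πlo..πhi, x * f x) ≤ πhi := by
    have := hxFA πhi hhiIcc
    rwa [hFhi, mul_one] at this
  refine ⟨?_, hval, ?_⟩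
  · -- monotonicity
    intro p hp p' hp' hFp hFp' hpp'
    have hsub : Set.Icc p p' ⊆ Set.Icc πlo πhi := Set.Icc_subset_Icc hp.1 hp'.2
    -- F is bounded below by 1/2 on [p, p']
    have hFhalf : ∀ x ∈ Set.Icc p p', 1 / 2 ≤ F x := fun x hx =>
      hFp.trans (hFmono p hp x (hsub hx) hx.1)
    have hFne : ∀ x ∈ Set.Icc p p', F x ≠ 0 := fun x hx => by
      have := hFhalf x hx; positivity
    have hFeq : F = fun u => ∫ t in πlo..u, f t := funext hF
    have hgeq : g = fun p => tk * ((∫ x in πlo..p, x * f x) / F p) - πhi * tk +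
        (p * F p - ∫ x in πlo..p, x * f x) * (ts - tk * (1 / F p - 1)) := funext hg
    -- continuity of F and the partial mean on the big interval
    have hFcont : ContinuousOn F (Set.Icc πlo πhi) := by
      rw [hFeq]
      have : Set.Icc πlo πhi = Set.uIcc πlo πhi := (Set.uIcc_of_le hle).symm
      rw [this]
      exact intervalIntegral.continuousOn_primitive_interval
        (by rw [← this]; exact hcont.integrableOn_Icc)
    have hAcont : ContinuousOn (fun u => ∫ t in πlo..u, t * f t) (Set.Icc πlo πhi) := by
      have : Set.Icc πlo πhi = Set.uIcc πlo πhi := (Set.uIcc_of_le hle).symm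
      rw [this]
      exact intervalIntegral.continuousOn_primitive_interval
        (by rw [← this]; exact hcontxf.integrableOn_Icc)
    have hgcont : ContinuousOn g (Set.Icc p p') := by
      rw [hgeq]
      apply ContinuousOn.add
      · exact ((continuousOn_const.mul ((hAcont.mono hsub).div (hFcont.mono hsub)
          hFne)).sub continuousOn_const)
      · exact ((continuousOn_id.mul (hFcont.mono hsub)).sub (hAcont.mono hsub)).mul
          (continuousOn_const.sub (continuousOn_const.mul
            ((continuousOn_const.div (hFcont.mono hsub) hFne).sub continuousOn_const)))
    -- derivative at interior points
    have key : ∀ x ∈ Set.Ioo p p', ∃ d, HasDerivAt g d x ∧ 0 ≤ d := by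
      intro x hx
      have hmem : x ∈ Set.Icc πlo πhi := hsub ⟨hx.1.le, hx.2.le⟩
      have hxcc : x ∈ Set.Icc p p' := ⟨hx.1.le, hx.2.le⟩
      have hnb : Set.Icc πlo πhi ∈ nhds x :=
        Icc_mem_nhds (lt_of_le_of_lt hp.1 hx.1) (lt_of_lt_of_le hx.2 hp'.2)
      have hOoo : ContinuousOn f (Set.Ioo πlo πhi) := hcont.mono Set.Ioo_subset_Icc_self
      have hxOoo : x ∈ Set.Ioo πlo πhi :=
        ⟨lt_of_le_of_lt hp.1 hx.1, lt_of_lt_of_le hx.2 hp'.2⟩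
      have hFd : HasDerivAt F (f x) x := by
        rw [hFeq]
        exact intervalIntegral.integral_hasDerivAt_right (hintf πlo hloIcc x hmem)
          (hOoo.stronglyMeasurableAtFilter isOpen_Ioo x hxOoo)
          (hcont.continuousAt hnb)
      have hAd : HasDerivAt (fun u => ∫ t in πlo..u, t * f t) (x * f x) x :=
        intervalIntegral.integral_hasDerivAt_right (hintxf πlo hloIcc x hmem)
          ((continuousOn_id.mul hOoo).stronglyMeasurableAtFilter isOpen_Ioo x hxOoo)
          ((hcontxf.continuousAt hnb))
      have hFxne : F x ≠ 0 := hFne x hxcc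
      set Ax := ∫ t in πlo..x, t * f t with hAx
      have h1 : HasDerivAt (fun u => tk * ((∫ t in πlo..u, t * f t) / F u))
          (tk * ((x * f x * F x - Ax * f x) / (F x) ^ 2)) x :=
        (hAd.div hFd hFxne).const_mul tk
      have h3 : HasDerivAt (fun u => u * F u - ∫ t in πlo..u, t * f t)
          (1 * F x + x * f x - x * f x) x :=
        ((hasDerivAt_id x).mul hFd).sub hAd
      have h4 : HasDerivAt (fun u => 1 / F u) ((0 * F x - 1 * f x) / (F x) ^ 2) x :=
        (hasDerivAt_const x (1 : ℝ)).div hFd hFxne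
      have h5 : HasDerivAt (fun u => ts - tk * (1 / F u - 1))
          (-(tk * ((0 * F x - 1 * f x) / (F x) ^ 2))) x :=
        ((h4.sub_const 1).const_mul tk).const_sub ts
      have hD : HasDerivAt g
          (tk * ((x * f x * F x - Ax * f x) / (F x) ^ 2) +
            ((1 * F x + x * f x - x * f x) * (ts - tk * (1 / F x - 1)) +
              (x * F x - Ax) * (-(tk * ((0 * F x - 1 * f x) / (F x) ^ 2))))) x := by
        rw [hgeq]
        exact (h1.sub_const (πhi * tk)).add (h3.mul h5)
      refine ⟨_, hD, ?_⟩
      have hfx : 0 ≤ f x := hnn x hmem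
      have hAle : Ax ≤ x * F x := hxFA x hmem
      have hhalf : 1 / 2 ≤ F x := hFhalf x hxcc
      have hrw : tk * ((x * f x * F x - Ax * f x) / (F x) ^ 2) +
            ((1 * F x + x * f x - x * f x) * (ts - tk * (1 / F x - 1)) +
              (x * F x - Ax) * (-(tk * ((0 * F x - 1 * f x) / (F x) ^ 2)))) =
          2 * tk * f x * (x * F x - Ax) / (F x) ^ 2 + (F x * (ts + tk) - tk) := by
        field_simp
        ring
      rw [hrw]
      have h6 : 0 ≤ 2 * tk * f x * (x * F x - Ax) / (F x) ^ 2 := by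
        apply div_nonneg _ (sq_nonneg _)
        have : 0 ≤ x * F x - Ax := by linarith
        positivity
      nlinarith
    -- assemble via monotoneOn_of_deriv_nonneg
    have hmono : MonotoneOn g (Set.Icc p p') := by
      apply monotoneOn_of_deriv_nonneg (convex_Icc p p') hgcont
      · intro x hx
        rw [interior_Icc] at hx
        obtain ⟨d, hd, _⟩ := key x hx
        exact hd.differentiableAt.differentiableWithinAt
      · intro x hx
        rw [interior_Icc] at hx
        obtain ⟨d, hd, hd0⟩ := key x hx
        rw [hd.deriv]; exact hd0
    exact hmono ⟨le_refl p, hpp'⟩ ⟨hpp', le_refl p'⟩ hpp'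
  · rw [hval]
    have : 0 ≤ πhi - ∫ x in πlo..πhi, x * f x := by linarith
    have h2 : 0 ≤ ts - tk := by linarith
    positivity
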